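/- Symmetry identity II: for each pair of positive integers c, d, all n ≥ 0 and α ≥ 1, Σ_{l=0}^{n} binom(n,l) c^{n-l} d^{l} Σ_{i=0}^{c-1} Σ_{j=0}^{d-1} (β/a)^{(i+j)b} _{eH}P_{n-l,β}^{(α,m,r)}(dx + (d/c)i, d^m y, d^r z; k,a,b) _{eH}P_{l,β}^{(α,m,r)}(cX + (c/d)j, c^m Y, c^r Z; k,a,b) = Σ_{l=0}^{n} binom(n,l) d^{n-l} c^{l} Σ_{i=0}^{d-1} Σ_{j=0}^{c-1} (β/a)^{(i+j)b} _{eH}P_{n-l,β}^{(α,m,r)}(cx + (c/d)i, c^m y, c^r z; k,a,b) _{eH}P_{l,β}^{(α,m,r)}(dX + (d/c)j, d^m Y, d^r Z; k,a,b). -/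

import Mathlib

open scoped BigOperators

/-- The exponential series `e^{ct}` in `ℂ[[t]]`. -/
noncomputable def expC (c : ℂ) : PowerSeries ℂ :=
  PowerSeries.mk fun n => c ^ n / n.factorial

/-- The series `e^{y t^m} = ∑_k y^k t^{mk}/k!` in `ℂ[[t]]`. -/
noncomputable def expMonC (y : ℂ) (m : ℕ) : PowerSeries ℂ :=
  PowerSeries.mk fun n => if m ∣ n then y ^ (n / m) / (n / m).factorial else 0

open PowerSeries

lemma expC_eq_rescale_exp (u : ℂ) : expC u = PowerSeries.rescale u (PowerSeries.exp ℂ) := by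
  ext n
  simp [expC, PowerSeries.coeff_rescale, PowerSeries.coeff_exp, div_eq_mul_inv]

lemma expC_mul_expC (u v : ℂ) : expC u * expC v = expC (u + v) := by
  rw [expC_eq_rescale_exp, expC_eq_rescale_exp, expC_eq_rescale_exp,
    PowerSeries.exp_mul_exp_eq_exp_add]

lemma expC_zero : expC 0 = 1 := by
  ext n
  cases n <;> simp [expC, PowerSeries.coeff_one]

lemma expC_pow (u : ℂ) (i : ℕ) : expC u ^ i = expC ((i : ℂ) * u) := by
  induction i with
  | zero => simp [expC_zero]
  | succ i ih =>
      rw [pow_succ, ih, expC_mul_expC]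
      norm_num
      ring_nf

lemma rescale_expC (u v : ℂ) : PowerSeries.rescale u (expC v) = expC (u * v) := by
  ext n
  simp [PowerSeries.coeff_rescale, expC, mul_pow, mul_div_assoc]

lemma rescale_expMonC (u y : ℂ) (m : ℕ) :
    PowerSeries.rescale u (expMonC y m) = expMonC (u ^ m * y) m := by
  ext n
  simp only [PowerSeries.coeff_rescale, expMonC, PowerSeries.coeff_mk]
  split_ifs with h
  · rw [mul_pow, ← pow_mul, Nat.mul_div_cancel' h]
    ring
  · rw [mul_zero]

lemma telescope (q w : ℂ) (c : ℕ) :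
    (PowerSeries.C q * expC w - 1) *
      (∑ i ∈ Finset.range c, PowerSeries.C (q ^ i) * expC ((i : ℂ) * w)) =
    PowerSeries.C (q ^ c) * expC ((c : ℂ) * w) - 1 := by
  have h : ∀ i : ℕ, PowerSeries.C (q ^ i) * expC ((i : ℂ) * w)
      = (PowerSeries.C q * expC w) ^ i := by
    intro i; rw [mul_pow, ← expC_pow, map_pow]
  simp_rw [h]
  rw [mul_comm, geom_sum_mul]

lemma D_ne_zero {Bc A u : ℂ} (hA : A ≠ 0) (hu : u ≠ 0) :
    PowerSeries.C Bc * expC u - PowerSeries.C A ≠ 0 := by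
  intro h
  have h0 := congrArg (PowerSeries.coeff 0) h
  have h1 := congrArg (PowerSeries.coeff 1) h
  simp [expC, PowerSeries.coeff_C] at h0 h1
  rcases h1 with h1 | h1
  · rw [h1, zero_sub, neg_eq_zero] at h0
    exact hA h0
  · exact hu h1

lemma one_sub_ne_zero {z : ℂ} {r : ℕ} (hr : r ≠ 0) :
    (1 : PowerSeries ℂ) - PowerSeries.C z * PowerSeries.X ^ r ≠ 0 := by
  intro h
  have h0 := congrArg (PowerSeries.coeff 0) h
  simp [PowerSeries.coeff_X_pow, hr, Ne.symm hr] at h0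

lemma cpow_aux {a : ℝ} (ha : 0 < a) (β : ℂ) {s : ℂ} (hs : s ≠ 0) :
    (β / (a : ℂ)) ^ s * (a : ℂ) ^ s = β ^ s := by
  rcases eq_or_ne β 0 with rfl | hβ
  · simp [Complex.zero_cpow hs]
  · have ha' : (a : ℂ) ≠ 0 := by
      simpa using ha.ne'
    have hw : β / (a : ℂ) ≠ 0 := div_ne_zero hβ ha'
    have hlog : Complex.log β = (Real.log a : ℂ) + Complex.log (β / a) := by
      conv_lhs => rw [show β = (a : ℂ) * (β / a) by field_simp]
      exact Complex.log_ofReal_mul ha hw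
    rw [Complex.cpow_def_of_ne_zero hw, Complex.cpow_def_of_ne_zero ha',
      Complex.cpow_def_of_ne_zero hβ, ← Complex.exp_add, hlog,
      ← Complex.ofReal_log ha.le]
    ring_nf

lemma coeff_aux (q : ℂ) (c d : ℕ) (E1 E2 : ℕ → ℕ → ℂ) (n : ℕ) :
    (∑ l ∈ Finset.range (n + 1), (n.choose l : ℂ) * (c : ℂ) ^ (n - l) * (d : ℂ) ^ l *
        ∑ i ∈ Finset.range c, ∑ j ∈ Finset.range d,
          q ^ (i + j) * E1 (n - l) i * E2 l j)
      = (n.factorial : ℂ) * PowerSeries.coeff n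
          (∑ i ∈ Finset.range c, ∑ j ∈ Finset.range d, PowerSeries.C (q ^ (i + j)) *
            (PowerSeries.rescale (c : ℂ) (PowerSeries.mk fun t => E1 t i / t.factorial) *
             PowerSeries.rescale (d : ℂ) (PowerSeries.mk fun t => E2 t j / t.factorial))) := by
  have hrhs : ∀ i j : ℕ,
      PowerSeries.coeff n
        (PowerSeries.C (q ^ (i + j)) *
          (PowerSeries.rescale (c : ℂ) (PowerSeries.mk fun t => E1 t i / t.factorial) *
           PowerSeries.rescale (d : ℂ) (PowerSeries.mk fun t => E2 t j / t.factorial)))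
      = ∑ l ∈ Finset.range (n + 1),
          q ^ (i + j) * (((c : ℂ) ^ l * (E1 l i / l.factorial)) *
            ((d : ℂ) ^ (n - l) * (E2 (n - l) j / (n - l).factorial))) := by
    intro i j
    rw [PowerSeries.coeff_C_mul, PowerSeries.coeff_mul,
      Finset.Nat.sum_antidiagonal_eq_sum_range_succ_mk, Finset.mul_sum]
    refine Finset.sum_congr rfl fun l _ => ?_
    simp [PowerSeries.coeff_rescale, PowerSeries.coeff_mk]
  have key : ∀ l, l ≤ n → ∀ i j : ℕ,
      (n.choose l : ℂ) * (c : ℂ) ^ l * (d : ℂ) ^ (n - l) *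
          (q ^ (i + j) * E1 l i * E2 (n - l) j)
        = (n.factorial : ℂ) * (q ^ (i + j) * (((c : ℂ) ^ l * (E1 l i / l.factorial)) *
            ((d : ℂ) ^ (n - l) * (E2 (n - l) j / (n - l).factorial)))) := by
    intro l hl i j
    have hfact : ((n.choose l : ℂ) * (l.factorial : ℂ) * ((n - l).factorial : ℂ))
        = (n.factorial : ℂ) := by
      exact_mod_cast congrArg (Nat.cast (R := ℂ)) (Nat.choose_mul_factorial_mul_factorial hl)
    rw [← hfact]
    have h1 : (l.factorial : ℂ) ≠ 0 := Nat.cast_ne_zero.mpr l.factorial_ne_zero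
    have h2 : ((n - l).factorial : ℂ) ≠ 0 := Nat.cast_ne_zero.mpr (n - l).factorial_ne_zero
    field_simp
  calc
    (∑ l ∈ Finset.range (n + 1), (n.choose l : ℂ) * (c : ℂ) ^ (n - l) * (d : ℂ) ^ l *
        ∑ i ∈ Finset.range c, ∑ j ∈ Finset.range d,
          q ^ (i + j) * E1 (n - l) i * E2 l j)
        = ∑ l ∈ Finset.range (n + 1), ∑ i ∈ Finset.range c, ∑ j ∈ Finset.range d,
            (n.factorial : ℂ) * (q ^ (i + j) * (((c : ℂ) ^ l * (E1 l i / l.factorial)) *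
              ((d : ℂ) ^ (n - l) * (E2 (n - l) j / (n - l).factorial)))) := by
        conv_lhs => rw [← Finset.sum_range_reflect]
        refine Finset.sum_congr rfl fun l hl => ?_
        have hl' : l ≤ n := Nat.lt_succ_iff.mp (Finset.mem_range.mp hl)
        rw [show n + 1 - 1 - l = n - l by omega, Nat.sub_sub_self hl', Nat.choose_symm hl',
          Finset.mul_sum]
        refine Finset.sum_congr rfl fun i _ => ?_
        rw [Finset.mul_sum]
        exact Finset.sum_congr rfl fun j _ => key l hl' i j
    _ = ∑ i ∈ Finset.range c, ∑ j ∈ Finset.range d, ∑ l ∈ Finset.range (n + 1),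
            (n.factorial : ℂ) * (q ^ (i + j) * (((c : ℂ) ^ l * (E1 l i / l.factorial)) *
              ((d : ℂ) ^ (n - l) * (E2 (n - l) j / (n - l).factorial)))) := by
        rw [Finset.sum_comm]
        exact Finset.sum_congr rfl fun i _ => Finset.sum_comm
    _ = (n.factorial : ℂ) * PowerSeries.coeff n
          (∑ i ∈ Finset.range c, ∑ j ∈ Finset.range d, PowerSeries.C (q ^ (i + j)) *
            (PowerSeries.rescale (c : ℂ) (PowerSeries.mk fun t => E1 t i / t.factorial) *
             PowerSeries.rescale (d : ℂ) (PowerSeries.mk fun t => E2 t j / t.factorial))) := by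
        rw [map_sum]
        simp_rw [map_sum, hrhs]
        simp [Finset.mul_sum]


lemma rescale_C' (u ao : ℂ) : PowerSeries.rescale u (PowerSeries.C ao) = PowerSeries.C ao := by
  ext n
  cases n <;> simp [PowerSeries.coeff_rescale, PowerSeries.coeff_C]

set_option maxHeartbeats 2000000 in
/-- Symmetry identity II for the unified Apostol type-truncated exponential-Gould-Hopper
polynomials `EHP n x y z = _{eH}P_{n,β}^{(α,m,r)}(x,y,z;k,a,b)`. -/
theorem symmetry_identity_II
    (a b : ℝ) (ha : 0 < a) (hb : 0 < b) (β : ℂ) (k m r α : ℕ) (hα : 1 ≤ α)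
    (EHP : ℕ → ℝ → ℝ → ℝ → ℂ)
    (hEHP : ∀ (x y z : ℝ),
      (PowerSeries.C ((((2 : ℝ) ^ ((1 : ℝ) - (k : ℝ)) : ℝ) : ℂ)) *
          PowerSeries.X ^ k) ^ α * (expC (x : ℂ) * expMonC (y : ℂ) m) =
        (PowerSeries.C (β ^ (b : ℂ)) * expC 1 - PowerSeries.C ((a ^ b : ℝ) : ℂ)) ^ α *
          ((1 - PowerSeries.C (z : ℂ) * PowerSeries.X ^ r) *
            PowerSeries.mk (fun n => EHP n x y z / n.factorial)))
    (c d : ℕ) (hc : 0 < c) (hd : 0 < d) (x y z X1 Y1 Z1 : ℝ) (n : ℕ) :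
    (∑ l ∈ Finset.range (n + 1), (n.choose l : ℂ) * (c : ℂ) ^ (n - l) * (d : ℂ) ^ l *
        ∑ i ∈ Finset.range c, ∑ j ∈ Finset.range d,
          ((β / (a : ℂ)) ^ (b : ℂ)) ^ (i + j) *
            EHP (n - l) ((d : ℝ) * x + ((d : ℝ) / (c : ℝ)) * i)
              ((d : ℝ) ^ m * y) ((d : ℝ) ^ r * z) *
            EHP l ((c : ℝ) * X1 + ((c : ℝ) / (d : ℝ)) * j)
              ((c : ℝ) ^ m * Y1) ((c : ℝ) ^ r * Z1)) =
      ∑ l ∈ Finset.range (n + 1), (n.choose l : ℂ) * (d : ℂ) ^ (n - l) * (c : ℂ) ^ l *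
        ∑ i ∈ Finset.range d, ∑ j ∈ Finset.range c,
          ((β / (a : ℂ)) ^ (b : ℂ)) ^ (i + j) *
            EHP (n - l) ((c : ℝ) * x + ((c : ℝ) / (d : ℝ)) * i)
              ((c : ℝ) ^ m * y) ((c : ℝ) ^ r * z) *
            EHP l ((d : ℝ) * X1 + ((d : ℝ) / (c : ℝ)) * j)
              ((d : ℝ) ^ m * Y1) ((d : ℝ) ^ r * Z1) := by
  -- notation
  set c₀ : ℂ := (((2 : ℝ) ^ ((1 : ℝ) - (k : ℝ)) : ℝ) : ℂ) with hc₀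
  set A : ℂ := ((a ^ b : ℝ) : ℂ) with hA'
  set B : ℂ := β ^ (b : ℂ) with hB'
  set q : ℂ := (β / (a : ℂ)) ^ (b : ℂ) with hq'
  have hA : A ≠ 0 := by
    rw [hA']
    exact_mod_cast (Real.rpow_pos_of_pos ha b).ne'
  have hbC : (b : ℂ) ≠ 0 := by exact_mod_cast hb.ne'
  have hBqA : B = q * A := by
    rw [hA', hB', hq', Complex.ofReal_cpow ha.le]
    exact (cpow_aux ha β hbC).symm
  have hc₀ne : c₀ ≠ 0 := by
    rw [hc₀]
    exact Complex.ofReal_ne_zero.mpr (Real.rpow_pos_of_pos (by norm_num) _).ne'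
  -- r ≠ 0
  have hr : r ≠ 0 := by
    intro hr0
    subst hr0
    have h := hEHP 0 0 1
    rw [pow_zero, mul_one, Complex.ofReal_one, map_one, sub_self, zero_mul, mul_zero] at h
    have hX : (PowerSeries.X : PowerSeries ℂ) ≠ 0 := PowerSeries.X_ne_zero
    have hCne : PowerSeries.C c₀ ≠ 0 := by
      intro hC
      have := congrArg (PowerSeries.coeff 0) hC
      simp [PowerSeries.coeff_C] at this
      exact hc₀ne this
    have hEM : expC ((0 : ℝ) : ℂ) * expMonC ((0 : ℝ) : ℂ) m ≠ 0 := by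
      intro hE
      have := congrArg (PowerSeries.coeff 0) hE
      rw [PowerSeries.coeff_mul] at this
      simp [expC, expMonC, Finset.Nat.antidiagonal_zero] at this
    exact (mul_ne_zero (pow_ne_zero _ (mul_ne_zero hCne (pow_ne_zero _ hX))) hEM) h
  -- rescaled generating relation
  have hres : ∀ (u : ℂ) (x' y' z' : ℝ),
      PowerSeries.C (c₀ ^ α * u ^ (k * α)) * PowerSeries.X ^ (k * α) *
          (expC (u * (x' : ℂ)) * expMonC (u ^ m * (y' : ℂ)) m)
        = (PowerSeries.C B * expC u - PowerSeries.C A) ^ α *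
            ((1 - PowerSeries.C (u ^ r * (z' : ℂ)) * PowerSeries.X ^ r) *
              PowerSeries.rescale u (PowerSeries.mk fun t => EHP t x' y' z' / t.factorial)) := by
    intro u x' y' z'
    have h := congrArg (PowerSeries.rescale u) (hEHP x' y' z')
    simp only [map_mul, map_pow, map_sub, map_one, rescale_X, rescale_expC, rescale_expMonC,
      rescale_C', mul_one] at h
    have e1 : PowerSeries.C (c₀ ^ α * u ^ (k * α)) * PowerSeries.X ^ (k * α)
        = (PowerSeries.C c₀ * (PowerSeries.C u * PowerSeries.X) ^ k) ^ α := by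
      rw [map_mul, map_pow, map_pow]
      ring
    have e2 : PowerSeries.C (u ^ r * (z' : ℂ)) * PowerSeries.X ^ r
        = PowerSeries.C (z' : ℂ) * (PowerSeries.C u * PowerSeries.X) ^ r := by
      rw [map_mul, map_pow]
      ring
    rw [e1, e2]
    exact h
  have side : ∀ (u v : ℕ), 0 < u → 0 < v →
      ((1 - PowerSeries.C (((u : ℂ) * (v : ℂ)) ^ r * (z : ℂ)) * PowerSeries.X ^ r) * (1 - PowerSeries.C (((u : ℂ) * (v : ℂ)) ^ r * (Z1 : ℂ)) * PowerSeries.X ^ r) * ((PowerSeries.C B * expC (u : ℂ) - PowerSeries.C A) ^ α * (PowerSeries.C B * expC (v : ℂ) - PowerSeries.C A) ^ α * (PowerSeries.C B * expC (u : ℂ) - PowerSeries.C A) * (PowerSeries.C B * expC (v : ℂ) - PowerSeries.C A))) * (∑ i ∈ Finset.range u, ∑ j ∈ Finset.range v, PowerSeries.C (q ^ (i + j)) * ((PowerSeries.rescale ((u : ℕ) : ℂ) (PowerSeries.mk fun t => EHP t ((v : ℝ) * x + ((v : ℝ) / (u : ℝ)) * (i : ℝ)) ((v : ℝ) ^ m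 * y) ((v : ℝ) ^ r * z) / t.factorial)) * (PowerSeries.rescale ((v : ℕ) : ℂ) (PowerSeries.mk fun t => EHP t ((u : ℝ) * X1 + ((u : ℝ) / (v : ℝ)) * (j : ℝ)) ((u : ℝ) ^ m * Y1) ((u : ℝ) ^ r * Z1) / t.factorial))))
      = (PowerSeries.C (c₀ ^ α * (u : ℂ) ^ (k * α)) * PowerSeries.X ^ (k * α)) * (PowerSeries.C (c₀ ^ α * (v : ℂ) ^ (k * α)) * PowerSeries.X ^ (k * α)) * ((expC ((u : ℂ) * (v : ℂ) * (x : ℂ))) * (expMonC (((u : ℂ) * (v : ℂ)) ^ m * (y : ℂ)) m)) * ((expC ((u : ℂ) * (v : ℂ) * (X1 : ℂ))) * (expMonC (((u : ℂ) * (v : ℂ)) ^ m * (Y1 : ℂ)) m)) * ((PowerSeries.C A) * (PowerSeries.C A)) * ((PowerSeries.C (q ^ u) * expC ((u : ℂ) * (v : ℂ)) - 1) * (PowerSeries.C (q ^ v) * expC ((v : ℂ) * (u : ℂ)) - 1)) := by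
    intro u v hu hv
    have huC : ((u : ℕ) : ℂ) ≠ 0 := Nat.cast_ne_zero.mpr hu.ne'
    have hvC : ((v : ℕ) : ℂ) ≠ 0 := Nat.cast_ne_zero.mpr hv.ne'
    have huR : ((u : ℕ) : ℝ) ≠ 0 := Nat.cast_ne_zero.mpr hu.ne'
    have hvR : ((v : ℕ) : ℝ) ≠ 0 := Nat.cast_ne_zero.mpr hv.ne'
    have h1 : ∀ i : ℕ, (PowerSeries.C B * expC (u : ℂ) - PowerSeries.C A) ^ α * ((1 - PowerSeries.C (((u : ℂ) * (v : ℂ)) ^ r * (z : ℂ)) * PowerSeries.X ^ r) * (PowerSeries.rescale ((u : ℕ) : ℂ) (PowerSeries.mk fun t => EHP t ((v : ℝ) * x + ((v : ℝ) / (u : ℝ)) * (i : ℝ)) ((v : ℝ) ^ m * y) ((v : ℝ) ^ r * z) / t.factorial)))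
        = (PowerSeries.C (c₀ ^ α * (u : ℂ) ^ (k * α)) * PowerSeries.X ^ (k * α)) * (((expC ((u : ℂ) * (v : ℂ) * (x : ℂ))) * expC ((i : ℂ) * ((v : ℕ) : ℂ))) * (expMonC (((u : ℂ) * (v : ℂ)) ^ m * (y : ℂ)) m)) := by
      intro i
      have h := hres ((u : ℕ) : ℂ) (((v : ℕ) : ℝ) * x + (((v : ℕ) : ℝ) / ((u : ℕ) : ℝ)) * (i : ℝ))
        (((v : ℕ) : ℝ) ^ m * y) (((v : ℕ) : ℝ) ^ r * z)
      rw [show (((u : ℕ) : ℂ) * ((((v : ℕ) : ℝ) * x + (((v : ℕ) : ℝ) / ((u : ℕ) : ℝ)) * (i : ℝ) : ℝ) : ℂ))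
            = ((u : ℕ) : ℂ) * ((v : ℕ) : ℂ) * (x : ℂ) + (i : ℂ) * ((v : ℕ) : ℂ) by
          push_cast
          field_simp,
        show (((u : ℕ) : ℂ) ^ m * (((((v : ℕ) : ℝ) ^ m * y) : ℝ) : ℂ))
            = (((u : ℕ) : ℂ) * ((v : ℕ) : ℂ)) ^ m * (y : ℂ) by push_cast; ring,
        show (((u : ℕ) : ℂ) ^ r * (((((v : ℕ) : ℝ) ^ r * z) : ℝ) : ℂ))
            = (((u : ℕ) : ℂ) * ((v : ℕ) : ℂ)) ^ r * (z : ℂ) by push_cast; ring,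
        ← expC_mul_expC] at h
      exact h.symm
    have h2 : ∀ j : ℕ, (PowerSeries.C B * expC (v : ℂ) - PowerSeries.C A) ^ α * ((1 - PowerSeries.C (((u : ℂ) * (v : ℂ)) ^ r * (Z1 : ℂ)) * PowerSeries.X ^ r) * (PowerSeries.rescale ((v : ℕ) : ℂ) (PowerSeries.mk fun t => EHP t ((u : ℝ) * X1 + ((u : ℝ) / (v : ℝ)) * (j : ℝ)) ((u : ℝ) ^ m * Y1) ((u : ℝ) ^ r * Z1) / t.factorial)))
        = (PowerSeries.C (c₀ ^ α * (v : ℂ) ^ (k * α)) * PowerSeries.X ^ (k * α)) * (((expC ((u : ℂ) * (v : ℂ) * (X1 : ℂ))) * expC ((j : ℂ) * ((u : ℕ) : ℂ))) * (expMonC (((u : ℂ) * (v : ℂ)) ^ m * (Y1 : ℂ)) m)) := by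
      intro j
      have h := hres ((v : ℕ) : ℂ) (((u : ℕ) : ℝ) * X1 + (((u : ℕ) : ℝ) / ((v : ℕ) : ℝ)) * (j : ℝ))
        (((u : ℕ) : ℝ) ^ m * Y1) (((u : ℕ) : ℝ) ^ r * Z1)
      rw [show (((v : ℕ) : ℂ) * ((((u : ℕ) : ℝ) * X1 + (((u : ℕ) : ℝ) / ((v : ℕ) : ℝ)) * (j : ℝ) : ℝ) : ℂ))
            = ((u : ℕ) : ℂ) * ((v : ℕ) : ℂ) * (X1 : ℂ) + (j : ℂ) * ((u : ℕ) : ℂ) by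
          push_cast
          field_simp,
        show (((v : ℕ) : ℂ) ^ m * (((((u : ℕ) : ℝ) ^ m * Y1) : ℝ) : ℂ))
            = (((u : ℕ) : ℂ) * ((v : ℕ) : ℂ)) ^ m * (Y1 : ℂ) by push_cast; ring,
        show (((v : ℕ) : ℂ) ^ r * (((((u : ℕ) : ℝ) ^ r * Z1) : ℝ) : ℂ))
            = (((u : ℕ) : ℂ) * ((v : ℕ) : ℂ)) ^ r * (Z1 : ℂ) by push_cast; ring,
        ← expC_mul_expC] at h
      exact h.symm
    have hsum1 : (PowerSeries.C B * expC (u : ℂ) - PowerSeries.C A) ^ α * ((1 - PowerSeries.C (((u : ℂ) * (v : ℂ)) ^ r * (z : ℂ)) * PowerSeries.X ^ r) * (∑ i ∈ Finset.range u, PowerSeries.C (q ^ i) * (PowerSeries.rescale ((u : ℕ) : ℂ) (PowerSeries.mk fun t => EHP t ((v : ℝ) * x + ((v : ℝ) / (u : ℝ)) * (i : ℝ)) ((v : ℝ) ^ m * y) ((v : ℝ) ^ r * z) / t.factorial))))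
        = (PowerSeries.C (c₀ ^ α * (u : ℂ) ^ (k * α)) * PowerSeries.X ^ (k * α)) * ((expC ((u : ℂ) * (v : ℂ) * (x : ℂ))) * (expMonC (((u : ℂ) * (v : ℂ)) ^ m * (y : ℂ)) m)) * (∑ i ∈ Finset.range u, PowerSeries.C (q ^ i) * expC ((i : ℂ) * (v : ℂ))) := by
      simp only [Finset.mul_sum]
      refine Finset.sum_congr rfl fun i _ => ?_
      linear_combination (PowerSeries.C (q ^ i)) * h1 i
    have hsum2 : (PowerSeries.C B * expC (v : ℂ) - PowerSeries.C A) ^ α * ((1 - PowerSeries.C (((u : ℂ) * (v : ℂ)) ^ r * (Z1 : ℂ)) * PowerSeries.X ^ r) * (∑ j ∈ Finset.range v, PowerSeries.C (q ^ j) * (PowerSeries.rescale ((v : ℕ) : ℂ) (PowerSeries.mk fun t => EHP t ((u : ℝ) * X1 + ((u : ℝ) / (v : ℝ)) * (j : ℝ)) ((u : ℝ) ^ m * Y1) ((u : ℝ) ^ r * Z1) / t.factorial))))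
        = (PowerSeries.C (c₀ ^ α * (v : ℂ) ^ (k * α)) * PowerSeries.X ^ (k * α)) * ((expC ((u : ℂ) * (v : ℂ) * (X1 : ℂ))) * (expMonC (((u : ℂ) * (v : ℂ)) ^ m * (Y1 : ℂ)) m)) * (∑ j ∈ Finset.range v, PowerSeries.C (q ^ j) * expC ((j : ℂ) * (u : ℂ))) := by
      simp only [Finset.mul_sum]
      refine Finset.sum_congr rfl fun j _ => ?_
      linear_combination (PowerSeries.C (q ^ j)) * h2 j
    have hD : ∀ w : ℂ, PowerSeries.C B * expC w - PowerSeries.C A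
        = PowerSeries.C A * (PowerSeries.C q * expC w - 1) := by
      intro w
      rw [hBqA, map_mul]
      ring
    have hprod : (∑ i ∈ Finset.range u, ∑ j ∈ Finset.range v, PowerSeries.C (q ^ (i + j)) * ((PowerSeries.rescale ((u : ℕ) : ℂ) (PowerSeries.mk fun t => EHP t ((v : ℝ) * x + ((v : ℝ) / (u : ℝ)) * (i : ℝ)) ((v : ℝ) ^ m * y) ((v : ℝ) ^ r * z) / t.factorial)) * (PowerSeries.rescale ((v : ℕ) : ℂ) (PowerSeries.mk fun t => EHP t ((u : ℝ) * X1 + ((u : ℝ) / (v : ℝ)) * (j : ℝ)) ((u : ℝ) ^ m * Y1) ((u : ℝ) ^ r * Z1) / t.factorial)))) = (∑ i ∈ Finset.range u, PowerSeries.C (q ^ i) * (PowerSeries.rescale ((u : ℕ) : ℂ) (PowerSeries.mk fun t => EHP t ((v : ℝ) * x + ((v : ℝ) / (u : ℝ)) * (i : ℝ)) ((v : ℝ) ^ m * y) ((v : ℝ) ^ r * z) / t.factorial))) * (∑ j ∈ Finset.range v, PowerSeries.C (q ^ j) * (PowerSeries.rescale ((v : ℕ) : ℂ) (PowerSeries.mk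 fun t => EHP t ((u : ℝ) * X1 + ((u : ℝ) / (v : ℝ)) * (j : ℝ)) ((u : ℝ) ^ m * Y1) ((u : ℝ) ^ r * Z1) / t.factorial))) := by
      rw [Finset.sum_mul_sum]
      refine Finset.sum_congr rfl fun i _ => Finset.sum_congr rfl fun j _ => ?_
      rw [pow_add, map_mul]
      ring
    have htel1 := telescope q ((v : ℕ) : ℂ) u
    have htel2 := telescope q ((u : ℕ) : ℂ) v
    calc ((1 - PowerSeries.C (((u : ℂ) * (v : ℂ)) ^ r * (z : ℂ)) * PowerSeries.X ^ r) * (1 - PowerSeries.C (((u : ℂ) * (v : ℂ)) ^ r * (Z1 : ℂ)) * PowerSeries.X ^ r) * ((PowerSeries.C B * expC (u : ℂ) - PowerSeries.C A) ^ α * (PowerSeries.C B * expC (v : ℂ) - PowerSeries.C A) ^ α * (PowerSeries.C B * expC (u : ℂ) - PowerSeries.C A) * (PowerSeries.C B * expC (v : ℂ) - PowerSeries.C A))) * (∑ i ∈ Finset.range u, ∑ j ∈ Finset.range v, PowerSeries.C (q ^ (i + j)) * ((PowerSeries.rescale ((u : ℕ) : ℂ) (PowerSeries.mk fun t => EHP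 t ((v : ℝ) * x + ((v : ℝ) / (u : ℝ)) * (i : ℝ)) ((v : ℝ) ^ m * y) ((v : ℝ) ^ r * z) / t.factorial)) * (PowerSeries.rescale ((v : ℕ) : ℂ) (PowerSeries.mk fun t => EHP t ((u : ℝ) * X1 + ((u : ℝ) / (v : ℝ)) * (j : ℝ)) ((u : ℝ) ^ m * Y1) ((u : ℝ) ^ r * Z1) / t.factorial))))
        = ((PowerSeries.C B * expC (u : ℂ) - PowerSeries.C A) ^ α * ((1 - PowerSeries.C (((u : ℂ) * (v : ℂ)) ^ r * (z : ℂ)) * PowerSeries.X ^ r) * (∑ i ∈ Finset.range u, PowerSeries.C (q ^ i) * (PowerSeries.rescale ((u : ℕ) : ℂ) (PowerSeries.mk fun t => EHP t ((v : ℝ) * x + ((v : ℝ) / (u : ℝ)) * (i : ℝ)) ((v : ℝ) ^ m * y) ((v : ℝ) ^ r * z) / t.factorial))))) * ((PowerSeries.C B * expC (v : ℂ) - PowerSeries.C A) ^ α * ((1 - PowerSeries.C (((u : ℂ) * (v : ℂ)) ^ r * (Z1 : ℂ)) * PowerSeries.X ^ r) * (∑ j ∈ Finset.range v, PowerSeries.C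 (q ^ j) * (PowerSeries.rescale ((v : ℕ) : ℂ) (PowerSeries.mk fun t => EHP t ((u : ℝ) * X1 + ((u : ℝ) / (v : ℝ)) * (j : ℝ)) ((u : ℝ) ^ m * Y1) ((u : ℝ) ^ r * Z1) / t.factorial)))))
            * ((PowerSeries.C B * expC (v : ℂ) - PowerSeries.C A) * (PowerSeries.C B * expC (u : ℂ) - PowerSeries.C A)) := by
          rw [hprod]
          ring
      _ = ((PowerSeries.C (c₀ ^ α * (u : ℂ) ^ (k * α)) * PowerSeries.X ^ (k * α)) * ((expC ((u : ℂ) * (v : ℂ) * (x : ℂ))) * (expMonC (((u : ℂ) * (v : ℂ)) ^ m * (y : ℂ)) m)) * (∑ i ∈ Finset.range u, PowerSeries.C (q ^ i) * expC ((i : ℂ) * (v : ℂ))))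
            * ((PowerSeries.C (c₀ ^ α * (v : ℂ) ^ (k * α)) * PowerSeries.X ^ (k * α)) * ((expC ((u : ℂ) * (v : ℂ) * (X1 : ℂ))) * (expMonC (((u : ℂ) * (v : ℂ)) ^ m * (Y1 : ℂ)) m)) * (∑ j ∈ Finset.range v, PowerSeries.C (q ^ j) * expC ((j : ℂ) * (u : ℂ))))
            * ((PowerSeries.C A) * (PowerSeries.C q * expC (v : ℂ) - 1) * ((PowerSeries.C A) * (PowerSeries.C q * expC (u : ℂ) - 1))) := by
          rw [hsum1, hsum2, hD (((v : ℕ)) : ℂ), hD (((u : ℕ)) : ℂ)]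
      _ = (PowerSeries.C (c₀ ^ α * (u : ℂ) ^ (k * α)) * PowerSeries.X ^ (k * α)) * (PowerSeries.C (c₀ ^ α * (v : ℂ) ^ (k * α)) * PowerSeries.X ^ (k * α)) * ((expC ((u : ℂ) * (v : ℂ) * (x : ℂ))) * (expMonC (((u : ℂ) * (v : ℂ)) ^ m * (y : ℂ)) m)) * ((expC ((u : ℂ) * (v : ℂ) * (X1 : ℂ))) * (expMonC (((u : ℂ) * (v : ℂ)) ^ m * (Y1 : ℂ)) m))
            * ((PowerSeries.C A) * (PowerSeries.C A)) * (((PowerSeries.C q * expC (v : ℂ) - 1) * (∑ i ∈ Finset.range u, PowerSeries.C (q ^ i) * expC ((i : ℂ) * (v : ℂ)))) * ((PowerSeries.C q * expC (u : ℂ) - 1) * (∑ j ∈ Finset.range v, PowerSeries.C (q ^ j) * expC ((j : ℂ) * (u : ℂ))))) := by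
          ring
      _ = (PowerSeries.C (c₀ ^ α * (u : ℂ) ^ (k * α)) * PowerSeries.X ^ (k * α)) * (PowerSeries.C (c₀ ^ α * (v : ℂ) ^ (k * α)) * PowerSeries.X ^ (k * α)) * ((expC ((u : ℂ) * (v : ℂ) * (x : ℂ))) * (expMonC (((u : ℂ) * (v : ℂ)) ^ m * (y : ℂ)) m)) * ((expC ((u : ℂ) * (v : ℂ) * (X1 : ℂ))) * (expMonC (((u : ℂ) * (v : ℂ)) ^ m * (Y1 : ℂ)) m)) * ((PowerSeries.C A) * (PowerSeries.C A)) * ((PowerSeries.C (q ^ u) * expC ((u : ℂ) * (v : ℂ)) - 1) * (PowerSeries.C (q ^ v) * expC ((v : ℂ) * (u : ℂ)) - 1)) := by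
          rw [htel1, htel2]
  have hside1 := side c d hc hd
  have hside2 := side d c hd hc
  simp only [mul_comm ((d : ℕ) : ℂ) ((c : ℕ) : ℂ)] at hside1 hside2
  have hDcne : (PowerSeries.C B * expC (c : ℂ) - PowerSeries.C A) ≠ 0 := D_ne_zero hA (Nat.cast_ne_zero.mpr hc.ne')
  have hDdne : (PowerSeries.C B * expC (d : ℂ) - PowerSeries.C A) ≠ 0 := D_ne_zero hA (Nat.cast_ne_zero.mpr hd.ne')
  have hMne : ((1 - PowerSeries.C (((c : ℂ) * (d : ℂ)) ^ r * (z : ℂ)) * PowerSeries.X ^ r) * (1 - PowerSeries.C (((c : ℂ) * (d : ℂ)) ^ r * (Z1 : ℂ)) * PowerSeries.X ^ r) * ((PowerSeries.C B * expC (c : ℂ) - PowerSeries.C A) ^ α * (PowerSeries.C B * expC (d : ℂ) - PowerSeries.C A) ^ α * (PowerSeries.C B * expC (c : ℂ) - PowerSeries.C A) * (PowerSeries.C B * expC (d : ℂ) - PowerSeries.C A))) ≠ 0 :=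
    mul_ne_zero (mul_ne_zero (one_sub_ne_zero hr) (one_sub_ne_zero hr))
      (mul_ne_zero (mul_ne_zero (mul_ne_zero (pow_ne_zero _ hDcne) (pow_ne_zero _ hDdne)) hDcne)
        hDdne)
  have hS12 : (∑ i ∈ Finset.range c, ∑ j ∈ Finset.range d, PowerSeries.C (q ^ (i + j)) * ((PowerSeries.rescale ((c : ℕ) : ℂ) (PowerSeries.mk fun t => EHP t ((d : ℝ) * x + ((d : ℝ) / (c : ℝ)) * (i : ℝ)) ((d : ℝ) ^ m * y) ((d : ℝ) ^ r * z) / t.factorial)) * (PowerSeries.rescale ((d : ℕ) : ℂ) (PowerSeries.mk fun t => EHP t ((c : ℝ) * X1 + ((c : ℝ) / (d : ℝ)) * (j : ℝ)) ((c : ℝ) ^ m * Y1) ((c : ℝ) ^ r * Z1) / t.factorial)))) = (∑ i ∈ Finset.range d, ∑ j ∈ Finset.range c, PowerSeries.C (q ^ (i + j)) * ((PowerSeries.rescale ((d : ℕ) : ℂ) (PowerSeries.mk fun t => EHP t ((c : ℝ) * x + ((c : ℝ) / (d : ℝ)) * (i : ℝ)) ((c : ℝ) ^ m * y) ((c : ℝ)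 ^ r * z) / t.factorial)) * (PowerSeries.rescale ((c : ℕ) : ℂ) (PowerSeries.mk fun t => EHP t ((d : ℝ) * X1 + ((d : ℝ) / (c : ℝ)) * (j : ℝ)) ((d : ℝ) ^ m * Y1) ((d : ℝ) ^ r * Z1) / t.factorial)))) := by
    apply mul_left_cancel₀ hMne
    rw [hside1]
    linear_combination -hside2
  calc (∑ l ∈ Finset.range (n + 1), (n.choose l : ℂ) * (c : ℂ) ^ (n - l) * (d : ℂ) ^ l *
        ∑ i ∈ Finset.range c, ∑ j ∈ Finset.range d,
          q ^ (i + j) *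
            EHP (n - l) ((d : ℝ) * x + ((d : ℝ) / (c : ℝ)) * i)
              ((d : ℝ) ^ m * y) ((d : ℝ) ^ r * z) *
            EHP l ((c : ℝ) * X1 + ((c : ℝ) / (d : ℝ)) * j)
              ((c : ℝ) ^ m * Y1) ((c : ℝ) ^ r * Z1))
      = (n.factorial : ℂ) * PowerSeries.coeff n (∑ i ∈ Finset.range c, ∑ j ∈ Finset.range d, PowerSeries.C (q ^ (i + j)) * ((PowerSeries.rescale ((c : ℕ) : ℂ) (PowerSeries.mk fun t => EHP t ((d : ℝ) * x + ((d : ℝ) / (c : ℝ)) * (i : ℝ)) ((d : ℝ) ^ m * y) ((d : ℝ) ^ r * z) / t.factorial)) * (PowerSeries.rescale ((d : ℕ) : ℂ) (PowerSeries.mk fun t => EHP t ((c : ℝ) * X1 + ((c : ℝ) / (d : ℝ)) * (j : ℝ)) ((c : ℝ) ^ m * Y1) ((c : ℝ) ^ r * Z1) / t.factorial)))) :=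
        coeff_aux q c d
          (fun t i => EHP t ((d : ℝ) * x + ((d : ℝ) / (c : ℝ)) * (i : ℝ)) ((d : ℝ) ^ m * y)
            ((d : ℝ) ^ r * z))
          (fun t j => EHP t ((c : ℝ) * X1 + ((c : ℝ) / (d : ℝ)) * (j : ℝ)) ((c : ℝ) ^ m * Y1)
            ((c : ℝ) ^ r * Z1)) n
    _ = (n.factorial : ℂ) * PowerSeries.coeff n (∑ i ∈ Finset.range d, ∑ j ∈ Finset.range c, PowerSeries.C (q ^ (i + j)) * ((PowerSeries.rescale ((d : ℕ) : ℂ) (PowerSeries.mk fun t => EHP t ((c : ℝ) * x + ((c : ℝ) / (d : ℝ)) * (i : ℝ)) ((c : ℝ) ^ m * y) ((c : ℝ) ^ r * z) / t.factorial)) * (PowerSeries.rescale ((c : ℕ) : ℂ) (PowerSeries.mk fun t => EHP t ((d : ℝ) * X1 + ((d : ℝ) / (c : ℝ)) * (j : ℝ)) ((d : ℝ) ^ m * Y1) ((d : ℝ) ^ r * Z1) / t.factorial)))) := by rw [hS12]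
    _ = (∑ l ∈ Finset.range (n + 1), (n.choose l : ℂ) * (d : ℂ) ^ (n - l) * (c : ℂ) ^ l *
        ∑ i ∈ Finset.range d, ∑ j ∈ Finset.range c,
          q ^ (i + j) *
            EHP (n - l) ((c : ℝ) * x + ((c : ℝ) / (d : ℝ)) * i)
              ((c : ℝ) ^ m * y) ((c : ℝ) ^ r * z) *
            EHP l ((d : ℝ) * X1 + ((d : ℝ) / (c : ℝ)) * j)
              ((d : ℝ) ^ m * Y1) ((d : ℝ) ^ r * Z1)) :=
        (coeff_aux q d c
          (fun t i => EHP t ((c : ℝ) * x + ((c : ℝ) / (d : ℝ)) * (i : ℝ)) ((c : ℝ) ^ m * y)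
            ((c : ℝ) ^ r * z))
          (fun t j => EHP t ((d : ℝ) * X1 + ((d : ℝ) / (c : ℝ)) * (j : ℝ)) ((d : ℝ) ^ m * Y1)
            ((d : ℝ) ^ r * Z1)) n).symm
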